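/- Let p be a prime, q = p^h, and let C be an additive MDS code of length n over F_q with |C| = q^k, where 1 ≤ k < n. Then C is additively equivalent to an additive code whose generator matrix, viewed as a kh × nh matrix over F_p upon identifying F_q with F_p^h, has its first kh columns equal to the identity matrix I_{kh} and in which, for each r ∈ {k+1,...,n} and each j ∈ {1,...,k}, the h×h block over F_p in block-row j and block-column r is a non-singular matrix. -/

import Mathlib

/-- Two codes `A, B ⊆ F^n` are *additively equivalent* if there exist a permutation `α`
of the coordinate positions and additive permutations `σ i` of the alphabet `F`
(bijections satisfying `σ i (x + y) = σ i x + σ i y`) such that the map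
`u ↦ (i ↦ σ i (u (α i)))` sends `A` onto `B`. -/
def AddCodeEquiv (F : Type*) [Add F] (n : ℕ) (A B : Set (Fin n → F)) : Prop :=
  ∃ (α : Equiv.Perm (Fin n)) (σ : Fin n → Equiv.Perm F),
    (∀ (i : Fin n) (x y : F), σ i (x + y) = σ i x + σ i y) ∧
    (fun u : Fin n → F => fun i => σ i (u (α i))) '' A = B

/-- A code `C ⊆ F^n` is *MDS* if it has a minimum distance `d` (the least Hamming
distance between distinct codewords) and `|C| = |F|^(n - d + 1)`. -/
def IsMDS (F : Type*) [Fintype F] [DecidableEq F] (n : ℕ) (C : Set (Fin n → F)) : Prop :=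
  ∃ d : ℕ,
    IsLeast {e : ℕ | ∃ u ∈ C, ∃ v ∈ C, u ≠ v ∧ hammingDist u v = e} d ∧
    Nat.card C = Fintype.card F ^ (n - d + 1)

/-- An additive MDS code `C` of length `n` over `F_q`, `q = p^h`, with `|C| = q^k` and
`1 ≤ k < n`, is additively equivalent to an additive code `D` possessing a generator
matrix `G` (a `kh × n` matrix over `F_q` whose rows form an `F_p`-basis of `D`, with rows
indexed by `Fin k × Fin h`) which, viewed as a `kh × nh` matrix over `F_p` by identifying
`F_q` with `F_p^h` via an additive (i.e. `F_p`-linear) bijection `φ`, has its first `kh`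
columns equal to the identity matrix `I_{kh}`, and in which, for each `r ∈ {k+1,...,n}`
and `j ∈ {1,...,k}`, the `h × h` block over `F_p` in block-row `j` and block-column `r`
is non-singular. -/
theorem additiveMDS_standard_generator_matrix
    (p h : ℕ) [Fact p.Prime]
    (F : Type*) [Field F] [Fintype F] [DecidableEq F]
    (hcard : Fintype.card F = p ^ h)
    (n k : ℕ) (hk : 1 ≤ k) (hkn : k < n)
    (C : AddSubgroup (Fin n → F))
    (hMDS : IsMDS F n (C : Set (Fin n → F)))
    (hCk : Nat.card C = (p ^ h) ^ k) :
    ∃ (D : AddSubgroup (Fin n → F)) (G : Matrix (Fin k × Fin h) (Fin n) F)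
      (φ : F ≃+ (Fin h → ZMod p)),
      AddCodeEquiv F n (C : Set (Fin n → F)) (D : Set (Fin n → F)) ∧
      -- the rows of `G` lie in `D` ...
      (∀ jt : Fin k × Fin h, G jt ∈ D) ∧
      -- ... they span `D` over `F_p` ...
      (∀ x ∈ D, ∃ m : Fin k × Fin h → ZMod p,
        x = ∑ jt : Fin k × Fin h, (m jt).val • G jt) ∧
      -- ... and they are linearly independent over `F_p`
      (∀ m m' : Fin k × Fin h → ZMod p,
        ∑ jt : Fin k × Fin h, (m jt).val • G jt =
          ∑ jt : Fin k × Fin h, (m' jt).val • G jt → m = m') ∧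
      -- the first `kh` columns of the `kh × nh` matrix over `F_p` form `I_{kh}`
      (∀ (jt : Fin k × Fin h) (r : Fin n) (hr : (r : ℕ) < k) (s : Fin h),
        φ (G jt r) s = if jt = (⟨(r : ℕ), hr⟩, s) then 1 else 0) ∧
      -- for `r ∈ {k+1,...,n}` and `j ∈ {1,...,k}` the `h × h` block is non-singular
      (∀ (j : Fin k) (r : Fin n), k ≤ (r : ℕ) →
        IsUnit (Matrix.of fun t s : Fin h => φ (G (j, t) r) s)) := by
  classical
  obtain ⟨d, ⟨hdmem, hleast⟩, hcardC⟩ := hMDS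
  obtain ⟨u0, hu0, v0, hv0, huv0, hd0⟩ := hdmem
  have hq2 : 2 ≤ p ^ h := by rw [← hcard]; exact Fintype.one_lt_card
  have hh1 : 1 ≤ h := by
    rcases Nat.eq_zero_or_pos h with rfl | hpos
    · simp at hq2
    · exact hpos
  have hdn : d ≤ n := by
    rw [← hd0]
    calc hammingDist u0 v0 ≤ Fintype.card (Fin n) := hammingDist_le_card_fintype
      _ = n := Fintype.card_fin n
  have hd1 : 1 ≤ d := by
    rw [← hd0]
    exact Nat.one_le_iff_ne_zero.mpr fun hz => huv0 (hammingDist_eq_zero.mp hz)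
  have hndk : n - d + 1 = k := by
    apply Nat.pow_right_injective hq2
    rw [hcard] at hcardC
    show (p ^ h) ^ (n - d + 1) = (p ^ h) ^ k
    rw [← hcardC]
    exact hCk
  -- key lemma: a codeword vanishing on k coordinates is zero
  have key : ∀ c ∈ C, ∀ S : Finset (Fin n), k ≤ S.card → (∀ i ∈ S, c i = 0) → c = 0 := by
    intro c hc S hS hz
    by_contra hne
    have hd2 : d ≤ hammingDist c 0 := hleast ⟨c, hc, 0, C.zero_mem, hne, rfl⟩
    have hsub : ({i | c i ≠ (0 : Fin n → F) i} : Finset (Fin n)) ⊆ Sᶜ := by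
      intro i hi
      rw [Finset.mem_filter] at hi
      rw [Finset.mem_compl]
      intro hiS
      exact hi.2 (hz i hiS)
    have hcard2 : hammingDist c 0 ≤ n - S.card := by
      have h4 := Finset.card_le_card hsub
      rw [Finset.card_compl, Fintype.card_fin] at h4
      exact h4
    have hSn : S.card ≤ n := by simpa using Finset.card_le_univ S
    omega
  -- the projection to the first k coordinates
  set ι : Fin k → Fin n := Fin.castLE hkn.le with hι
  have hιinj : Function.Injective ι := Fin.castLE_injective _
  let f : C →+ (Fin k → F) :=
    { toFun := fun c => fun j => (c : Fin n → F) (ι j)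
      map_zero' := rfl
      map_add' := fun a b => rfl }
  have hfinj : Function.Injective f := by
    intro a b hab
    have h5 : ((a : Fin n → F) - b) = 0 := by
      apply key _ (C.sub_mem a.2 b.2) (Finset.univ.image ι)
      · rw [Finset.card_image_of_injective _ hιinj, Finset.card_univ, Fintype.card_fin]
      · intro i hi
        obtain ⟨j, -, rfl⟩ := Finset.mem_image.mp hi
        have h6 : f a j = f b j := congrFun hab j
        simpa [f, sub_eq_zero] using h6
    exact Subtype.ext (sub_eq_zero.mp h5)
  have hfbij : Function.Bijective f := by
    refine (Nat.bijective_iff_injective_and_card f).mpr ⟨hfinj, ?_⟩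
    rw [hCk, Nat.card_eq_fintype_card, Fintype.card_fun, hcard, Fintype.card_fin]
  let e : C ≃+ (Fin k → F) := AddEquiv.ofBijective f hfbij
  -- the additive identification of F with (F_p)^h
  have hchar : CharP F p := by
    obtain ⟨p', hp'⟩ := CharP.exists F
    haveI := hp'
    obtain ⟨m, hpprime, hcard'⟩ := FiniteField.card F p'
    have hpp : p = p' := by
      have hdvd : p ∣ p' ^ (m : ℕ) := by
        rw [← hcard', hcard]
        exact dvd_pow_self p (by omega)
      exact (Nat.prime_dvd_prime_iff_eq Fact.out hpprime).mp
        (Nat.Prime.dvd_of_dvd_pow Fact.out hdvd)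
    rw [hpp]; exact hp'
  haveI := hchar
  letI : Algebra (ZMod p) F := ZMod.algebra F p
  have hfr : Module.finrank (ZMod p) F = h := by
    have h2 := Module.card_eq_pow_finrank (K := ZMod p) (V := F)
    rw [ZMod.card, hcard] at h2
    exact Nat.pow_right_injective (Fact.out : p.Prime).two_le h2.symm
  let b : Module.Basis (Fin h) (ZMod p) F := (Module.finBasis (ZMod p) F).reindex (finCongr hfr)
  let φ : F ≃+ (Fin h → ZMod p) := b.equivFun.toAddEquiv
  have hZ : ∀ w : Fin h → ZMod p,
      ∑ t, (w t).val • (Pi.single t (1 : ZMod p) : Fin h → ZMod p) = w := by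
    intro w
    funext s
    rw [Finset.sum_apply]
    have h3 : ∀ t, ((w t).val • (Pi.single t (1:ZMod p) : Fin h → ZMod p)) s
        = if t = s then w t else 0 := by
      intro t
      rcases eq_or_ne t s with rfl | hts
      · rw [Pi.smul_apply, Pi.single_eq_same, if_pos rfl, nsmul_eq_mul, mul_one,
          ZMod.natCast_val, ZMod.cast_id]
      · simp [Pi.smul_apply, Pi.single_eq_of_ne (Ne.symm hts), hts]
    simp_rw [h3]
    simp
  -- the generator rows
  set ε : Fin h → F := fun t => φ.symm (Pi.single t 1) with hε
  set wv : Fin k × Fin h → (Fin k → F) := fun jt => Pi.single jt.1 (ε jt.2) with hwv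
  set Gc : Fin k × Fin h → C := fun jt => e.symm (wv jt) with hGc
  set G : Matrix (Fin k × Fin h) (Fin n) F := Matrix.of fun jt => (Gc jt : Fin n → F) with hG
  have hGfirst : ∀ (jt : Fin k × Fin h) (j : Fin k), G jt (ι j) = wv jt j := by
    intro jt j
    have h7 : f (Gc jt) = wv jt := e.apply_symm_apply (wv jt)
    exact congrFun h7 j
  -- the key computation
  have hsum1 : ∀ (m : Fin k × Fin h → ZMod p) (j : Fin k),
      (∑ jt : Fin k × Fin h, (m jt).val • G jt) (ι j) = φ.symm (fun s => m (j, s)) := by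
    intro m j
    rw [Finset.sum_apply]
    have h1 : ∀ jt : Fin k × Fin h, ((m jt).val • G jt) (ι j) = (m jt).val • wv jt j := by
      intro jt; rw [Pi.smul_apply, hGfirst]
    simp_rw [h1]
    rw [Fintype.sum_prod_type]
    have h2 : ∀ (j' : Fin k) (t : Fin h), (m (j', t)).val • wv (j', t) j
        = if j' = j then (m (j', t)).val • ε t else 0 := by
      intro j' t
      rcases eq_or_ne j' j with rfl | hne
      · simp [hwv, Pi.single_eq_same]
      · simp [hwv, Pi.single_eq_of_ne (Ne.symm hne), hne]
    simp_rw [h2]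
    have h9 : ∀ j' : Fin k, (∑ t, if j' = j then (m (j', t)).val • ε t else 0)
        = if j' = j then ∑ t, (m (j', t)).val • ε t else 0 := by
      intro j'; split <;> simp
    simp_rw [h9]
    rw [Finset.sum_ite_eq' Finset.univ j (fun j' => ∑ t, (m (j', t)).val • ε t),
      if_pos (Finset.mem_univ j)]
    calc ∑ t, (m (j, t)).val • ε t
        = φ.symm (∑ t, (m (j, t)).val • (Pi.single t (1:ZMod p) : Fin h → ZMod p)) := by
          rw [map_sum]
          exact Finset.sum_congr rfl fun t _ => (map_nsmul φ.symm _ _).symm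
      _ = φ.symm (fun s => m (j, s)) := by rw [hZ (fun t => m (j, t))]
  refine ⟨C, G, φ, ?_, ?_, ?_, ?_, ?_, ?_⟩
  · -- C is additively equivalent to itself
    refine ⟨1, fun _ => Equiv.refl F, fun _ _ _ => rfl, ?_⟩
    simp only [Equiv.refl_apply, Equiv.Perm.one_apply]
    exact Set.image_id _
  · -- the rows lie in C
    exact fun jt => (Gc jt).2
  · -- the rows span C over F_p
    intro x hx
    refine ⟨fun jt => φ (x (ι jt.1)) jt.2, ?_⟩
    set m : Fin k × Fin h → ZMod p := fun jt => φ (x (ι jt.1)) jt.2 with hm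
    have hmem : ∑ jt : Fin k × Fin h, (m jt).val • G jt ∈ C :=
      sum_mem fun jt _ => nsmul_mem (Gc jt).2 _
    have h10 : f ⟨x, hx⟩ = f ⟨_, hmem⟩ := by
      funext j
      show x (ι j) = (∑ jt : Fin k × Fin h, (m jt).val • G jt) (ι j)
      rw [hsum1 m j]
      have h11 : (fun s => m (j, s)) = φ (x (ι j)) := rfl
      rw [h11, φ.symm_apply_apply]
    exact congrArg Subtype.val (hfinj h10)
  · -- the rows are F_p-independent
    intro m m' heq
    funext jt
    obtain ⟨j, s⟩ := jt
    have h11 := congrFun heq (ι j)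
    rw [hsum1 m j, hsum1 m' j] at h11
    exact congrFun (φ.symm.injective h11) s
  · -- identity block
    intro jt r hr s
    obtain ⟨j, t⟩ := jt
    have hre : ι ⟨(r : ℕ), hr⟩ = r := Fin.ext (by simp [hι])
    have hGr : G (j, t) r = wv (j, t) ⟨(r : ℕ), hr⟩ := by
      conv_lhs => rw [← hre]
      rw [hGfirst]
    rw [hGr]
    rcases eq_or_ne j (⟨(r : ℕ), hr⟩ : Fin k) with heq | hne
    · subst heq
      simp only [hwv]
      rw [Pi.single_eq_same]
      have h13 : φ (ε t) = Pi.single t 1 := by rw [hε]; exact φ.apply_symm_apply _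
      rw [h13, Pi.single_apply]
      by_cases hts : s = t
      · subst hts; simp
      · simp [hts, Prod.ext_iff, Ne.symm hts]
    · simp only [hwv]
      rw [Pi.single_eq_of_ne (Ne.symm hne), map_zero]
      simp [Prod.ext_iff, hne]
  · -- non-singular blocks
    intro j r hrk
    rw [Matrix.isUnit_iff_isUnit_det, isUnit_iff_ne_zero]
    intro hdet
    obtain ⟨c, hc0, hcM⟩ := Matrix.exists_vecMul_eq_zero_iff.mpr hdet
    set u : Fin n → F := ∑ t, (c t).val • G (j, t) with hu
    have humem : u ∈ C := by
      rw [hu]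
      exact sum_mem fun t _ => nsmul_mem (Gc (j, t)).2 _
    have hur : u r = 0 := by
      apply φ.injective
      rw [map_zero]
      funext s
      have h15 := congrFun hcM s
      rw [Pi.zero_apply] at h15
      simp only [Matrix.vecMul, dotProduct, Matrix.of_apply] at h15
      calc φ (u r) s
          = (∑ t, φ ((c t).val • G (j, t) r)) s := by
            rw [hu, Finset.sum_apply]
            simp only [Pi.smul_apply]
            rw [map_sum]
        _ = ∑ t, c t * φ (G (j, t) r) s := by
            rw [Finset.sum_apply]
            refine Finset.sum_congr rfl fun t _ => ?_
            rw [map_nsmul, Pi.smul_apply, nsmul_eq_mul, ZMod.natCast_val, ZMod.cast_id]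
        _ = 0 := h15
      -- done
    have huj : ∀ j' : Fin k, j' ≠ j → u (ι j') = 0 := by
      intro j' hne
      rw [hu, Finset.sum_apply]
      apply Finset.sum_eq_zero
      intro t _
      rw [Pi.smul_apply, hGfirst]
      simp only [hwv]
      rw [Pi.single_eq_of_ne hne, smul_zero]
    have huz : u = 0 := by
      apply key u humem ((Finset.univ.erase j).image ι ∪ {r})
      · have hrnot : r ∉ (Finset.univ.erase j).image ι := by
          intro hmem2
          obtain ⟨j', -, hj'⟩ := Finset.mem_image.mp hmem2
          have h16 : (ι j' : ℕ) = (r : ℕ) := congrArg Fin.val hj'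
          have h17 : (ι j' : ℕ) = (j' : ℕ) := rfl
          have h18 : (j' : ℕ) < k := j'.2
          omega
        rw [Finset.card_union_of_disjoint (Finset.disjoint_singleton_right.mpr hrnot),
          Finset.card_image_of_injective _ hιinj, Finset.card_erase_of_mem (Finset.mem_univ j),
          Finset.card_univ, Fintype.card_fin, Finset.card_singleton]
        omega
      · intro i hi
        rcases Finset.mem_union.mp hi with hi | hi
        · obtain ⟨j', hj'mem, rfl⟩ := Finset.mem_image.mp hi
          exact huj j' (Finset.mem_erase.mp hj'mem).1
        · rw [Finset.mem_singleton.mp hi]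
          exact hur
    have hujj : u (ι j) = φ.symm c := by
      rw [hu, Finset.sum_apply]
      have h17 : ∀ t, ((c t).val • G (j, t)) (ι j) = (c t).val • ε t := by
        intro t
        rw [Pi.smul_apply, hGfirst]
        simp only [hwv]
        rw [Pi.single_eq_same]
      simp_rw [h17]
      calc ∑ t, (c t).val • ε t
          = φ.symm (∑ t, (c t).val • (Pi.single t (1:ZMod p) : Fin h → ZMod p)) := by
            rw [map_sum]
            exact Finset.sum_congr rfl fun t _ => (map_nsmul φ.symm _ _).symm
        _ = φ.symm c := by rw [hZ c]
    rw [huz] at hujj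
    apply hc0
    apply φ.symm.injective
    rw [map_zero, ← hujj]
    simp
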